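/- Under assumption (GT): for every η₁ > 0, taking B as in (GT), for all integers 0 ≤ m < n and all x ∈ ℝ one has the lower pointwise bound F̄_n^m(x) ≥ Q_m(F̄_n^{m+1}(x + B)) − η₁, where Q_m(u) = ∑_{k≥1} p_{m,k}·(1 − (1−u)^k). -/

import Mathlib

open MeasureTheory Set Filter

/-- Under assumption (GT): for every `η₁ > 0`, taking `B` as in (GT),
for all `0 ≤ m < n` and all `x` one has the lower pointwise bound
`F̄_n^m(x) ≥ Q_m(F̄_n^{m+1}(x + B)) − η₁`, where
`Q_m(u) = ∑_{k≥1} p_{m,k}·(1 − (1−u)^k)`. -/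
theorem stmt_6
    (p : ℕ → ℕ → ℝ)
    (G : (n : ℕ) → (k : ℕ) → Measure (Fin k → ℝ))
    (g : ℕ → ℕ → Measure ℝ)
    (hp0 : ∀ n, p n 0 = 0)
    (hpnonneg : ∀ n k, 0 ≤ p n k)
    (hpsum : ∀ n, HasSum (p n) 1)
    (hpmean : ∀ n, Summable (fun k : ℕ => (k : ℝ) * p n k))
    (hGprob : ∀ n k, IsProbabilityMeasure (G n k))
    (hgprob : ∀ n k, IsProbabilityMeasure (g n k))
    (hmarg : ∀ n k (i : Fin k), (G n k).map (fun y => y i) = g n k)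
    (F : ℕ → ℕ → ℝ → ℝ)
    (hF01 : ∀ n m, m ≤ n → ∀ x, F n m x ∈ Icc (0 : ℝ) 1)
    (hFanti : ∀ n m, m ≤ n → Antitone (F n m))
    (hFrc : ∀ n m, m ≤ n → ∀ x, ContinuousWithinAt (F n m) (Ici x) x)
    (hFn1 : ∀ n (x : ℝ), x < 0 → F n n x = 1)
    (hFn0 : ∀ n (x : ℝ), 0 ≤ x → F n n x = 0)
    (hrec : ∀ n m, m < n → ∀ x : ℝ,
      F n m x = 1 - ∑' k : ℕ, p m k *
        ∫ y : Fin k → ℝ, (∏ i, (1 - F n (m + 1) (x - y i))) ∂(G m k))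
    -- `B` as provided by assumption (GT) for the given `η₁`
    (η₁ : ℝ) (hη₁ : 0 < η₁) (B : ℝ) (hB : 0 < B)
    (hGT : ∀ n k, p n k ≠ 0 →
      1 - η₁ ≤ ((G n k) {y | ∀ i, y i ≤ B}).toReal ∧
      1 - η₁ ≤ ((G n k) {y | ∀ i, -B ≤ y i}).toReal)
    (n m : ℕ) (hmn : m < n) (x : ℝ) :
    (∑' k : ℕ, p m k * (1 - (1 - F n (m + 1) (x + B)) ^ k)) - η₁ ≤ F n m x := by

  have hmn' : m + 1 ≤ n := hmn
  set u := F n (m + 1) (x + B) with hu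
  obtain ⟨hu0, hu1⟩ := hF01 n (m+1) hmn' (x + B)
  have h1u0 : (0:ℝ) ≤ 1 - u := by linarith
  have hpow0 : ∀ k : ℕ, 0 ≤ (1-u)^k := fun k => pow_nonneg h1u0 k
  have hpow1 : ∀ k : ℕ, (1-u)^k ≤ 1 := fun k => pow_le_one₀ h1u0 (by linarith)
  have hFmeas : Measurable (F n (m+1)) := (hFanti n (m+1) hmn').measurable
  have hfmeas : ∀ k : ℕ, Measurable (fun y : Fin k → ℝ =>
      ∏ i, (1 - F n (m+1) (x - y i))) := fun k =>
    Finset.measurable_prod _ fun i _ =>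
      measurable_const.sub (hFmeas.comp (measurable_const.sub (measurable_pi_apply i)))
  have hf0 : ∀ (k : ℕ) (y : Fin k → ℝ), 0 ≤ ∏ i, (1 - F n (m+1) (x - y i)) := fun k y =>
    Finset.prod_nonneg fun i _ => by
      have := hF01 n (m+1) hmn' (x - y i); linarith [this.2]
  have hf1 : ∀ (k : ℕ) (y : Fin k → ℝ), ∏ i, (1 - F n (m+1) (x - y i)) ≤ 1 := fun k y =>
    Finset.prod_le_one (fun i _ => by
        have := hF01 n (m+1) hmn' (x - y i); linarith [this.2])
      (fun i _ => by have := hF01 n (m+1) hmn' (x - y i); linarith [this.1])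
  set I : ℕ → ℝ := fun k => ∫ y : Fin k → ℝ,
      (∏ i, (1 - F n (m+1) (x - y i))) ∂(G m k) with hI
  have hint : ∀ k : ℕ, Integrable (fun y : Fin k → ℝ =>
      ∏ i, (1 - F n (m+1) (x - y i))) (G m k) := fun k => by
    haveI := hGprob m k
    refine (integrable_const (1:ℝ)).mono' (hfmeas k).aestronglyMeasurable
      (ae_of_all _ fun y => ?_)
    rw [Real.norm_eq_abs, abs_of_nonneg (hf0 k y)]
    exact hf1 k y
  have hI0 : ∀ k, 0 ≤ I k := fun k => integral_nonneg (hf0 k)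
  have hI1 : ∀ k, I k ≤ 1 := fun k => by
    haveI := hGprob m k
    calc I k ≤ ∫ _ : Fin k → ℝ, (1:ℝ) ∂(G m k) :=
          integral_mono (hint k) (integrable_const 1) (hf1 k)
      _ = 1 := by simp
  have hIbound : ∀ k : ℕ, p m k ≠ 0 → I k ≤ (1-u)^k + η₁ := by
    intro k hpk
    haveI := hGprob m k
    set A : Set (Fin k → ℝ) := {y | ∀ i, -B ≤ y i} with hAdef
    have hA : MeasurableSet A := by
      have hAeq : A = ⋂ i, {y : Fin k → ℝ | -B ≤ y i} := by
        ext y; simp [hAdef]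
      rw [hAeq]
      exact MeasurableSet.iInter fun i =>
        measurableSet_le measurable_const (measurable_pi_apply i)
    have hGA : 1 - η₁ ≤ ((G m k) A).toReal := (hGT m k hpk).2
    have hGA1 : ((G m k) A).toReal ≤ 1 := by
      have := ENNReal.toReal_mono (a := (G m k) A) ENNReal.one_ne_top prob_le_one
      simpa using this
    have hsplit := integral_add_compl hA (hint k)
    have h1 : ∫ y in A, (∏ i, (1 - F n (m+1) (x - y i))) ∂(G m k) ≤ (1-u)^k := by
      calc ∫ y in A, (∏ i, (1 - F n (m+1) (x - y i))) ∂(G m k)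
          ≤ ∫ _ in A, ((1-u)^k) ∂(G m k) := by
            refine setIntegral_mono_on (hint k).integrableOn
              (integrableOn_const (measure_ne_top _ _)) hA fun y hy => ?_
            calc ∏ i, (1 - F n (m+1) (x - y i)) ≤ ∏ _i : Fin k, (1 - u) := by
                  refine Finset.prod_le_prod (fun i _ => by
                    have := hF01 n (m+1) hmn' (x - y i); linarith [this.2]) (fun i _ => ?_)
                  have hle : x - y i ≤ x + B := by have := hy i; linarith
                  have := hFanti n (m+1) hmn' hle
                  linarith
              _ = (1-u)^k := by simp
        _ = ((G m k) A).toReal * (1-u)^k := by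
            rw [setIntegral_const]; simp [smul_eq_mul, measureReal_def]
        _ ≤ 1 * (1-u)^k := mul_le_mul_of_nonneg_right hGA1 (hpow0 k)
        _ = (1-u)^k := one_mul _
    have hcompl : ((G m k) Aᶜ).toReal = 1 - ((G m k) A).toReal := by
      have h1' : (G m k) Aᶜ = 1 - (G m k) A := by
        rw [measure_compl hA (measure_ne_top _ _), measure_univ]
      rw [h1', ENNReal.toReal_sub_of_le prob_le_one ENNReal.one_ne_top]
      simp
    have h2 : ∫ y in Aᶜ, (∏ i, (1 - F n (m+1) (x - y i))) ∂(G m k) ≤ η₁ := by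
      calc ∫ y in Aᶜ, (∏ i, (1 - F n (m+1) (x - y i))) ∂(G m k)
          ≤ ∫ _ in Aᶜ, (1:ℝ) ∂(G m k) := by
            refine setIntegral_mono_on (hint k).integrableOn
              (integrableOn_const (measure_ne_top _ _)) hA.compl
              fun y _ => hf1 k y
        _ = ((G m k) Aᶜ).toReal := by simp [measureReal_def]
        _ = 1 - ((G m k) A).toReal := hcompl
        _ ≤ η₁ := by linarith
    have : I k = (∫ y in A, (∏ i, (1 - F n (m+1) (x - y i))) ∂(G m k))
        + ∫ y in Aᶜ, (∏ i, (1 - F n (m+1) (x - y i))) ∂(G m k) := hsplit.symm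
    linarith
  have hps : Summable (p m) := (hpsum m).summable
  have S1 : Summable (fun k => p m k * I k) :=
    Summable.of_nonneg_of_le (fun k => mul_nonneg (hpnonneg m k) (hI0 k))
      (fun k => mul_le_of_le_one_right (hpnonneg m k) (hI1 k)) hps
  have S3 : Summable (fun k => p m k * (1-u)^k) :=
    Summable.of_nonneg_of_le (fun k => mul_nonneg (hpnonneg m k) (hpow0 k))
      (fun k => mul_le_of_le_one_right (hpnonneg m k) (hpow1 k)) hps
  have S2 : Summable (fun k => p m k * ((1-u)^k + η₁)) := by
    have : (fun k => p m k * ((1-u)^k + η₁))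
        = fun k => p m k * (1-u)^k + p m k * η₁ := funext fun k => mul_add _ _ _
    rw [this]
    exact S3.add (hps.mul_right η₁)
  have hT : ∑' k, p m k * I k ≤ (∑' k, p m k * (1-u)^k) + η₁ := by
    have hle : ∀ k, p m k * I k ≤ p m k * ((1-u)^k + η₁) := fun k => by
      by_cases hpk : p m k = 0
      · simp [hpk]
      · exact mul_le_mul_of_nonneg_left (hIbound k hpk) (hpnonneg m k)
    calc ∑' k, p m k * I k ≤ ∑' k, p m k * ((1-u)^k + η₁) := Summable.tsum_le_tsum hle S1 S2
      _ = (∑' k, p m k * (1-u)^k) + η₁ := by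
          have heq : (fun k => p m k * ((1-u)^k + η₁))
              = fun k => p m k * (1-u)^k + p m k * η₁ := funext fun k => mul_add _ _ _
          rw [heq, Summable.tsum_add S3 (hps.mul_right η₁), tsum_mul_right, (hpsum m).tsum_eq, one_mul]
  have hgoal_eq : ∑' k, p m k * (1 - (1-u)^k) = 1 - ∑' k, p m k * (1-u)^k := by
    have heq : (fun k => p m k * (1 - (1-u)^k))
        = fun k => p m k - p m k * (1-u)^k := funext fun k => by ring
    rw [heq, Summable.tsum_sub hps S3, (hpsum m).tsum_eq]
  have hrec' : F n m x = 1 - ∑' k, p m k * I k := hrec n m hmn x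
  rw [hrec', hgoal_eq]
  linarith
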